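/- For a positive reciprocal n×n matrix A, the Perron eigenvalue λ_max satisfies λ_max ≥ n, with equality if and only if A is consistent. -/

import Mathlib

/-- For a positive reciprocal matrix, the Perron eigenvalue (the eigenvalue
associated with a positive eigenvector) satisfies `λ_max ≥ n`, with equality
iff the matrix is consistent. -/
theorem perron_ge_n (n : ℕ) (hn : 0 < n) (A : Matrix (Fin n) (Fin n) ℝ)
    (hpos : ∀ i j, 0 < A i j) (hrec : ∀ i j, A j i = 1 / A i j)
    (lam : ℝ) (w : Fin n → ℝ) (hw : ∀ i, 0 < w i)
    (heig : A.mulVec w = lam • w) :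
    (n : ℝ) ≤ lam ∧ (lam = n ↔ ∀ i j k, A i k = A i j * A j k) := by
  have hn' : (0:ℝ) < n := Nat.cast_pos.mpr hn
  set f : Fin n → Fin n → ℝ := fun i j => A i j * w j / w i with hf
  have hfpos : ∀ i j, 0 < f i j := fun i j => div_pos (mul_pos (hpos i j) (hw j)) (hw i)
  have hfrec : ∀ i j, f i j * f j i = 1 := by
    intro i j
    have h1 := (hpos i j).ne'
    have h2 := (hw i).ne'
    have h3 := (hw j).ne'
    simp only [hf, hrec i j]
    field_simp
  have hrow : ∀ i, ∑ j, f i j = lam := by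
    intro i
    have h := congrFun heig i
    simp only [Matrix.mulVec, dotProduct, Pi.smul_apply, smul_eq_mul] at h
    show (∑ j : Fin n, A i j * w j / w i) = lam
    rw [← Finset.sum_div, h, mul_div_assoc, div_self (hw i).ne', mul_one]
  have hsum : ∑ i, ∑ j, f i j = n * lam := by
    simp [hrow, Finset.sum_const, Finset.card_univ, nsmul_eq_mul]
  have hpair : ∀ i j, 2 ≤ f i j + f j i := by
    intro i j
    nlinarith [hfpos i j, hfpos j i, hfrec i j, sq_nonneg (f i j - 1)]
  have hswap : ∑ i, ∑ j, f j i = ∑ i, ∑ j, f i j := Finset.sum_comm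
  have hdouble : ∑ i, ∑ j, (f i j + f j i) = 2 * (n * lam) := by
    simp only [Finset.sum_add_distrib, hswap, hsum]; ring
  have hlow : ∀ i, 2 * (n:ℝ) ≤ ∑ j, (f i j + f j i) := by
    intro i
    calc 2 * (n:ℝ) = ∑ _j : Fin n, (2:ℝ) := by
          simp [Finset.sum_const, Finset.card_univ]; ring
      _ ≤ ∑ j, (f i j + f j i) := Finset.sum_le_sum fun j _ => hpair i j
  have hlb : 2 * ((n:ℝ) * n) ≤ 2 * (n * lam) := by
    rw [← hdouble]
    calc 2 * ((n:ℝ) * n) = ∑ _i : Fin n, (2 * (n:ℝ)) := by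
          simp [Finset.sum_const, Finset.card_univ]; ring
      _ ≤ ∑ i, ∑ j, (f i j + f j i) := Finset.sum_le_sum fun i _ => hlow i
  have hlam : (n:ℝ) ≤ lam := by
    have := (mul_le_mul_iff_right₀ (by positivity : (0:ℝ) < 2 * n)).mp (by linarith [hlb] : 2 * (n:ℝ) * n ≤ 2 * n * lam)
    exact this
  refine ⟨hlam, ⟨?_, ?_⟩⟩
  · -- lam = n → consistent
    intro hlamn
    have hrowE : ∀ i ∈ (Finset.univ : Finset (Fin n)), ∑ j, (f i j + f j i) = 2 * (n:ℝ) := by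
      have htot : ∑ i, ∑ j, (f i j + f j i) = ∑ _i : Fin n, (2 * (n:ℝ)) := by
        rw [hdouble, hlamn]; simp [Finset.sum_const, Finset.card_univ]; ring
      exact fun i hi => ((Finset.sum_eq_sum_iff_of_le (fun i _ => hlow i)).mp htot.symm i hi).symm
    have hpairE : ∀ i j, f i j + f j i = 2 := by
      intro i j
      have h := hrowE i (Finset.mem_univ i)
      have h2 : ∑ _j : Fin n, (2:ℝ) = ∑ j, (f i j + f j i) := by
        rw [h]; simp [Finset.sum_const, Finset.card_univ]; ring
      exact ((Finset.sum_eq_sum_iff_of_le (fun j _ => hpair i j)).mp h2 j (Finset.mem_univ j)).symm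
    have hfone : ∀ i j, f i j = 1 := by
      intro i j
      nlinarith [hpairE i j, hfrec i j, hfpos i j, sq_nonneg (f i j - 1)]
    have hAij : ∀ i j, A i j = w i / w j := by
      intro i j
      have h := hfone i j
      have h2 := (hw i).ne'
      have h3 := (hw j).ne'
      have h' : A i j * w j / w i = 1 := h
      field_simp at h' ⊢
      linarith
    intro i j k
    rw [hAij, hAij, hAij]
    rw [div_mul_div_comm, mul_comm (w i) (w j), mul_div_mul_left _ _ (hw j).ne']
  · -- consistent → lam = n
    intro hcons
    have i0 : Fin n := ⟨0, hn⟩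
    set g : Fin n → ℝ := fun i => f i i0 with hg
    have hgpos : ∀ i, 0 < g i := fun i => hfpos i i0
    have hA00 : A i0 i0 = 1 := by
      have h := hrec i0 i0
      have hp := hpos i0 i0
      have h2 : A i0 i0 * A i0 i0 = 1 := by
        field_simp at h
        nlinarith [h]
      nlinarith [sq_nonneg (A i0 i0 - 1), sq_nonneg (A i0 i0 + 1)]
    have hg0 : g i0 = 1 := by
      show A i0 i0 * w i0 / w i0 = 1
      rw [hA00, one_mul, div_self (hw i0).ne']
    have hfg : ∀ i j, f i j * g j = g i := by
      intro i j
      have hc := hcons i j i0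
      show A i j * w j / w i * (A j i0 * w i0 / w j) = A i i0 * w i0 / w i
      rw [hc]
      have h2 := (hw i).ne'
      have h3 := (hw j).ne'
      field_simp
    have hrowg : ∀ i, g i * ∑ j, (g j)⁻¹ = lam := by
      intro i
      rw [← hrow i]
      rw [Finset.mul_sum]
      apply Finset.sum_congr rfl
      intro j _
      rw [← hfg i j]
      field_simp [(hgpos j).ne']
    have hT : ∑ j, (g j)⁻¹ = lam := by
      have := hrowg i0
      rwa [hg0, one_mul] at this
    have hTpos : 0 < ∑ j, (g j)⁻¹ := Finset.sum_pos (fun j _ => inv_pos.mpr (hgpos j)) ⟨i0, Finset.mem_univ i0⟩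
    have hgone : ∀ i, g i = 1 := by
      intro i
      have h := hrowg i
      rw [hT] at h
      have : g i * lam = 1 * lam := by rw [h, one_mul]
      exact mul_right_cancel₀ (by rw [← hT]; exact hTpos.ne') this
    have : lam = ∑ j : Fin n, (1:ℝ) := by
      rw [← hT]
      apply Finset.sum_congr rfl
      intro j _
      rw [hgone j]; norm_num
    rw [this]
    simp
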